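/- Let L be a nonempty compact convex set in ℝⁿ, let 1 ≤ d < n, and let Q be a polytope in ℝⁿ having at most d+1 vertices (the convex hull of at most d+1 points). Suppose that for every d-dimensional linear subspace ξ of ℝⁿ there exists v ∈ ξ such that Q_ξ + v ⊆ L_ξ, where Q_ξ and L_ξ denote the orthogonal projections of Q and L onto ξ. Then there exists v₀ ∈ ℝⁿ such that Q + v₀ ⊆ L. -/

import Mathlib

open Set Module Metric Pointwise RealInnerProductSpace

/-- The orthogonal projection of `ℝⁿ` onto a subspace `ξ`, viewed as a map `ℝⁿ → ℝⁿ`. -/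
noncomputable def projSub {n : ℕ} (ξ : Submodule ℝ (EuclideanSpace ℝ (Fin n)))
    (x : EuclideanSpace ℝ (Fin n)) : EuclideanSpace ℝ (Fin n) :=
  (Submodule.orthogonalProjectionOnto ξ x : EuclideanSpace ℝ (Fin n))

/-- The orthogonal projection of `ℝⁿ` onto the hyperplane `u^⊥`. -/
noncomputable def projHyp {n : ℕ} (u : EuclideanSpace ℝ (Fin n)) :
    EuclideanSpace ℝ (Fin n) → EuclideanSpace ℝ (Fin n) :=
  projSub ((Submodule.span ℝ {u})ᗮ)

/-- `IsSimplex n Δ` : `Δ` is an `n`-simplex in `ℝⁿ`, i.e. the convex hull of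
`n+1` affinely independent points. -/
def IsSimplex (n : ℕ) (Δ : Set (EuclideanSpace ℝ (Fin n))) : Prop :=
  ∃ p : Fin (n + 1) → EuclideanSpace ℝ (Fin n),
    AffineIndependent ℝ p ∧ Δ = convexHull ℝ (Set.range p)

lemma aux_sq (r δ ne t : ℝ) (hr : 0 < r) (hδ : 0 < δ) (ht : 0 < t)
    (htε : t * (ne ^ 2 + 1) ≤ r * δ) :
    r ^ 2 + 2 * (t * -(r * δ)) + (t * ne) ^ 2 < r ^ 2 := by
  nlinarith [mul_le_mul_of_nonneg_left htε ht.le, mul_pos ht hδ, mul_pos hr hδ, sq_nonneg ne,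
    mul_pos ht (mul_pos hr hδ), sq_nonneg t]

lemma aux_lin (R i ne t : ℝ) (hi : i < R) (hne : 0 ≤ ne) (ht : 0 < t)
    (htε : t * (ne + 1) ≤ R - i) : i + t * ne < R := by nlinarith

lemma aux_superset (V : Type*) [NormedAddCommGroup V] [InnerProductSpace ℝ V]
    [FiniteDimensional ℝ V] (d : ℕ) (hd : d ≤ finrank ℝ V) :
    ∀ (k : ℕ) (W : Submodule ℝ V), finrank ℝ W + k = d →
      ∃ ξ : Submodule ℝ V, W ≤ ξ ∧ finrank ℝ ξ = d := by
  intro k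
  induction k with
  | zero => exact fun W hW => ⟨W, le_rfl, by omega⟩
  | succ k ih =>
    intro W hW
    have hWt : W ≠ ⊤ := by
      intro hT
      have h1 : finrank ℝ (⊤ : Submodule ℝ V) = finrank ℝ V := finrank_top ℝ V
      rw [hT, h1] at hW
      omega
    obtain ⟨x, hx⟩ : ∃ x, x ∉ W := by
      by_contra hc
      push_neg at hc
      exact hWt (Submodule.eq_top_iff'.mpr hc)
    have hx0 : x ≠ 0 := fun h => hx (h ▸ W.zero_mem)
    have hinf : W ⊓ Submodule.span ℝ {x} = ⊥ := by
      rw [Submodule.eq_bot_iff]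
      rintro y ⟨hyW, hy⟩
      obtain ⟨c, rfl⟩ := Submodule.mem_span_singleton.mp hy
      rcases eq_or_ne c 0 with rfl | hc
      · simp
      · have hxW : x ∈ W := by
          have := W.smul_mem c⁻¹ hyW
          rwa [smul_smul, inv_mul_cancel₀ hc, one_smul] at this
        exact absurd hxW hx
    have hsup : finrank ℝ ↥(W ⊔ Submodule.span ℝ {x}) = finrank ℝ W + 1 := by
      have h2 := Submodule.finrank_sup_add_finrank_inf_eq W (Submodule.span ℝ {x})
      rw [hinf, finrank_span_singleton hx0, finrank_bot] at h2
      omega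
    obtain ⟨ξ, hle, hξ⟩ := ih (W ⊔ Submodule.span ℝ {x}) (by omega)
    exact ⟨ξ, le_sup_left.trans hle, hξ⟩

set_option maxHeartbeats 1600000 in
/-- d-shadow covering for a polytope with at most d+1 vertices implies containment. -/
theorem stmt_6 {n : ℕ} (hn : 1 ≤ n) (d : ℕ) (hd1 : 1 ≤ d) (hdn : d < n)
    (L Q : Set (EuclideanSpace ℝ (Fin n)))
    (hLne : L.Nonempty) (hLcp : IsCompact L) (hLcv : Convex ℝ L)
    (hQ : ∃ s : Finset (EuclideanSpace ℝ (Fin n)), s.card ≤ d + 1 ∧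
      Q = convexHull ℝ (↑s : Set (EuclideanSpace ℝ (Fin n))))
    (h : ∀ ξ : Submodule ℝ (EuclideanSpace ℝ (Fin n)), Module.finrank ℝ ξ = d →
      ∃ v ∈ ξ, (fun x => x + v) '' (projSub ξ '' Q) ⊆ projSub ξ '' L) :
    ∃ v₀ : EuclideanSpace ℝ (Fin n), (fun x => x + v₀) '' Q ⊆ L := by
  classical
  obtain ⟨s, hscard, hQeq⟩ := hQ
  -- if all vertices land in L after translation, we're done
  have key : ∀ v : EuclideanSpace ℝ (Fin n), (∀ q ∈ s, q + v ∈ L) →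
      (fun x => x + v) '' Q ⊆ L := by
    intro v hv
    rw [hQeq]
    rintro y ⟨x, hx, rfl⟩
    have h1 : x + v ∈ convexHull ℝ (↑s : Set (EuclideanSpace ℝ (Fin n))) + {v} :=
      Set.add_mem_add hx rfl
    have h2 : convexHull ℝ (↑s : Set (EuclideanSpace ℝ (Fin n))) + {v} =
        convexHull ℝ ((↑s : Set (EuclideanSpace ℝ (Fin n))) + {v}) := by
      rw [convexHull_add, convexHull_singleton]
    rw [h2] at h1
    refine convexHull_min ?_ hLcv h1
    rintro z ⟨q, hq, w, hw, rfl⟩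
    rcases hw with rfl
    exact hv q hq
  rcases s.eq_empty_or_nonempty with rfl | hs
  · refine ⟨0, ?_⟩
    simp [hQeq]
  -- the sup of distances of translated vertices to L
  set g : EuclideanSpace ℝ (Fin n) → ℝ :=
    fun v => s.sup' hs (fun q => infDist (q + v) L) with hgdef
  have hgle : ∀ v, ∀ q ∈ s, infDist (q + v) L ≤ g v := fun v q hq => Finset.le_sup' (fun q => infDist (q + v) L) hq
  have hgcont : Continuous g := by
    rw [continuous_iff_continuousAt]
    intro v
    exact ContinuousAt.finset_sup'_apply hs fun q _ =>
      ((continuous_infDist_pt L).comp (continuous_const.add continuous_id)).continuousAt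
  obtain ⟨ℓ₀, hℓ₀⟩ := id hLne
  obtain ⟨q₀, hq₀⟩ := id hs
  set c := g (ℓ₀ - q₀) with hc
  have hc0 : 0 ≤ c := le_trans infDist_nonneg (hgle _ q₀ hq₀)
  set K : Set (EuclideanSpace ℝ (Fin n)) := (fun x => x - q₀) '' cthickening c L with hK
  have hKmem : ∀ v, v ∈ K ↔ q₀ + v ∈ cthickening c L := by
    intro v
    constructor
    · rintro ⟨x, hx, rfl⟩
      simpa [add_sub_cancel] using hx
    · intro hx
      exact ⟨q₀ + v, hx, add_sub_cancel_left q₀ v⟩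
  have hcthick : ∀ x, x ∈ cthickening c L ↔ infDist x L ≤ c := by
    intro x
    rw [mem_cthickening_iff,
      ENNReal.le_ofReal_iff_toReal_le (infEdist_ne_top hLne) hc0]
    rfl
  have hKne : (ℓ₀ - q₀) ∈ K := by
    rw [hKmem, hcthick]
    exact hgle _ q₀ hq₀
  have hKcp : IsCompact K := hLcp.cthickening.image (continuous_id.sub continuous_const)
  obtain ⟨vs, hvsK, hvsmin⟩ := hKcp.exists_isMinOn ⟨_, hKne⟩ hgcont.continuousOn
  set r := g vs with hrdef
  have hglobal : ∀ v, r ≤ g v := by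
    intro v
    by_cases hv : v ∈ K
    · exact isMinOn_iff.mp hvsmin v hv
    · have h1 : ¬ infDist (q₀ + v) L ≤ c := by rw [← hcthick, ← hKmem]; exact hv
      push_neg at h1
      calc r ≤ c := isMinOn_iff.mp hvsmin _ hKne
      _ ≤ infDist (q₀ + v) L := h1.le
      _ ≤ g v := hgle v q₀ hq₀
  rcases le_or_gt r 0 with hr0 | hrpos
  · refine ⟨vs, key vs ?_⟩
    intro q hq
    have h1 : infDist (q + vs) L = 0 :=
      le_antisymm (le_trans (hgle vs q hq) hr0) infDist_nonneg
    exact (hLcp.isClosed.mem_iff_infDist_zero hLne).mpr h1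
  · -- main contradiction argument
    exfalso
    have hnp : ∀ q : EuclideanSpace ℝ (Fin n),
        ∃ p, p ∈ L ∧ infDist (q + vs) L = dist (q + vs) p :=
      fun q => hLcp.exists_infDist_eq_dist hLne (q + vs)
    choose p hpL hpd using hnp
    have hobtuse : ∀ q, ∀ x ∈ L, ⟪(q + vs) - p q, x - p q⟫ ≤ 0 := by
      intro q x hx
      have hiInf : (‖(q + vs) - p q‖ : ℝ) = ⨅ w : L, ‖(q + vs) - ↑w‖ := by
        have h9 : (⨅ w : L, ‖(q + vs) - (w : EuclideanSpace ℝ (Fin n))‖)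
            = ⨅ w : L, dist (q + vs) (w : EuclideanSpace ℝ (Fin n)) := by
          simp only [dist_eq_norm]
        rw [h9, ← infDist_eq_iInf, ← dist_eq_norm, hpd q]
      exact (norm_eq_iInf_iff_real_inner_le_zero hLcv (hpL q)).mp hiInf x hx
    set active : Finset (EuclideanSpace ℝ (Fin n)) :=
      s.filter (fun q => infDist (q + vs) L = r) with hactive
    have hactne : active.Nonempty := by
      obtain ⟨q, hq, hqe⟩ := Finset.exists_mem_eq_sup' hs (fun q => infDist (q + vs) L)
      exact ⟨q, Finset.mem_filter.mpr ⟨hq, hqe.symm⟩⟩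
    set u : EuclideanSpace ℝ (Fin n) → EuclideanSpace ℝ (Fin n) :=
      fun q => (r⁻¹ : ℝ) • ((q + vs) - p q) with hu
    have hdist_act : ∀ q ∈ active, ‖(q + vs) - p q‖ = r := by
      intro q hq
      rw [← dist_eq_norm, ← hpd q]
      exact (Finset.mem_filter.mp hq).2
    have hrepr : ∀ q ∈ active, (q + vs) - p q = r • u q := by
      intro q hq
      rw [hu]
      simp only
      rw [smul_smul, mul_inv_cancel₀ hrpos.ne', one_smul]
    have hnorm_u : ∀ q ∈ active, ‖u q‖ = 1 := by
      intro q hq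
      rw [hu]
      simp only [norm_smul, hdist_act q hq, norm_inv, Real.norm_eq_abs,
        abs_of_pos hrpos]
      field_simp
    set U : Finset (EuclideanSpace ℝ (Fin n)) := active.image u with hU
    have h0U : (0 : EuclideanSpace ℝ (Fin n)) ∈
        convexHull ℝ (U : Set (EuclideanSpace ℝ (Fin n))) := by
      by_contra h0
      obtain ⟨f, cv, hfa, hfx⟩ := geometric_hahn_banach_closed_point
        (convex_convexHull ℝ _) ((U : Set (EuclideanSpace ℝ (Fin n))).toFinite.isClosed_convexHull (𝕜 := ℝ)) h0
      rw [map_zero] at hfx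
      set e := (InnerProductSpace.toDual ℝ (EuclideanSpace ℝ (Fin n))).symm f with he
      have hef : ∀ y, ⟪e, y⟫ = f y := fun y => InnerProductSpace.toDual_symm_apply
      have hsmall : ∀ q : EuclideanSpace ℝ (Fin n), ∃ ε : ℝ, 0 < ε ∧
          (q ∈ s → ∀ t : ℝ, 0 < t → t ≤ ε → infDist (q + (vs + t • e)) L < r) := by
        intro q
        by_cases hq : q ∈ s ∧ infDist (q + vs) L = r
        · have hqa : q ∈ active := Finset.mem_filter.mpr hq
          have huU : u q ∈ convexHull ℝ (U : Set (EuclideanSpace ℝ (Fin n))) :=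
            subset_convexHull _ _ (Finset.mem_coe.mpr (Finset.mem_image_of_mem u hqa))
          have hneg : f (u q) < cv := hfa _ huU
          have hδpos : 0 < -f (u q) := by linarith
          refine ⟨min 1 (r * (-f (u q)) / (‖e‖ ^ 2 + 1)), by positivity, fun _ t ht htε => ?_⟩
          have hinner : ⟪(q + vs) - p q, e⟫ = -(r * (-f (u q))) := by
            rw [hrepr q hqa, real_inner_smul_left, real_inner_comm, hef]
            ring
          have hexp := norm_add_sq_real ((q + vs) - p q) (t • e)
          rw [hdist_act q hqa, real_inner_smul_right, hinner, norm_smul,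
            Real.norm_eq_abs, abs_of_pos ht] at hexp
          have ht2 : t ≤ r * (-f (u q)) / (‖e‖ ^ 2 + 1) := le_trans htε (min_le_right _ _)
          have ht3 : t * (‖e‖ ^ 2 + 1) ≤ r * (-f (u q)) :=
            (le_div_iff₀ (by positivity)).mp ht2
          have hkey : ‖((q + vs) - p q) + t • e‖ ^ 2 < r ^ 2 := by
            rw [hexp]
            exact aux_sq r (-f (u q)) ‖e‖ t hrpos hδpos ht ht3
          have h4 : ‖((q + vs) - p q) + t • e‖ < r :=
            lt_of_pow_lt_pow_left₀ 2 hrpos.le hkey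
          have h2 : infDist (q + (vs + t • e)) L ≤ dist (q + (vs + t • e)) (p q) :=
            infDist_le_dist_of_mem (hpL q)
          have h3 : dist (q + (vs + t • e)) (p q) = ‖((q + vs) - p q) + t • e‖ := by
            rw [dist_eq_norm]
            congr 1
            abel
          calc infDist (q + (vs + t • e)) L ≤ dist (q + (vs + t • e)) (p q) := h2
            _ = ‖((q + vs) - p q) + t • e‖ := h3
            _ < r := h4
        · by_cases hqs : q ∈ s
          · have hlt : infDist (q + vs) L < r :=
              lt_of_le_of_ne (hgle vs q hqs) (fun hcon => hq ⟨hqs, hcon⟩)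
            refine ⟨(r - infDist (q + vs) L) / (‖e‖ + 1), div_pos (by linarith) (by positivity), fun _ t ht htε => ?_⟩
            have h5 : infDist (q + (vs + t • e)) L
                ≤ infDist (q + vs) L + dist (q + (vs + t • e)) (q + vs) :=
              infDist_le_infDist_add_dist
            have h6 : dist (q + (vs + t • e)) (q + vs) = t * ‖e‖ := by
              rw [dist_eq_norm]
              have : (q + (vs + t • e)) - (q + vs) = t • e := by abel
              rw [this, norm_smul, Real.norm_eq_abs, abs_of_pos ht]
            have ht3 : t * (‖e‖ + 1) ≤ r - infDist (q + vs) L :=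
              (le_div_iff₀ (by positivity)).mp htε
            have h7 : infDist (q + vs) L + t * ‖e‖ < r :=
              aux_lin r _ ‖e‖ t hlt (norm_nonneg e) ht ht3
            calc infDist (q + (vs + t • e)) L
                ≤ infDist (q + vs) L + dist (q + (vs + t • e)) (q + vs) := h5
              _ = infDist (q + vs) L + t * ‖e‖ := by rw [h6]
              _ < r := h7
          · exact ⟨1, one_pos, fun hqs' => absurd hqs' hqs⟩
      choose εf hεf using hsmall
      have ht₀pos : 0 < s.inf' hs εf := (Finset.lt_inf'_iff hs).mpr fun q _ => (hεf q).1
      have hltr : g (vs + (s.inf' hs εf) • e) < r := by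
        refine (Finset.sup'_lt_iff hs).mpr fun q hq => ?_
        exact (hεf q).2 hq _ ht₀pos (Finset.inf'_le εf hq)
      exact absurd (hglobal (vs + (s.inf' hs εf) • e)) (not_le.mpr hltr)
    -- extract convex weights for 0
    rw [Finset.convexHull_eq] at h0U
    obtain ⟨w, hw0, hw1, hwc⟩ := h0U
    rw [Finset.centerMass_eq_of_sum_1 _ _ hw1] at hwc
    simp only [id_eq] at hwc
    obtain ⟨y₀, hy₀U, hy₀pos⟩ : ∃ y₀ ∈ U, 0 < w y₀ := by
      by_contra hcon
      push_neg at hcon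
      have hzz : ∑ y ∈ U, w y = 0 :=
        Finset.sum_eq_zero fun y hy => le_antisymm (hcon y hy) (hw0 y hy)
      rw [hw1] at hzz
      norm_num at hzz
    have hWle : (U : Set (EuclideanSpace ℝ (Fin n))) ⊆
        ↑(Submodule.span ℝ ((U.erase y₀ : Finset (EuclideanSpace ℝ (Fin n))) :
          Set (EuclideanSpace ℝ (Fin n)))) := by
      intro y hy
      rw [Finset.mem_coe] at hy
      rcases eq_or_ne y y₀ with rfl | hne
      · have hsum : w y • y = - ∑ z ∈ U.erase y, w z • z := by
          have h11 := Finset.add_sum_erase U (fun z => w z • z) hy₀U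
          rw [hwc] at h11
          have := congrArg (fun t => t - ∑ z ∈ U.erase y, w z • z) h11
          simpa [add_sub_cancel_right] using this
        have hmem : w y • y ∈ Submodule.span ℝ
            ((U.erase y : Finset (EuclideanSpace ℝ (Fin n))) : Set (EuclideanSpace ℝ (Fin n))) := by
          rw [hsum]
          exact Submodule.neg_mem _ (Submodule.sum_mem _
            fun z hz => Submodule.smul_mem _ _ (Submodule.subset_span (Finset.mem_coe.mpr hz)))
        have h12 := Submodule.smul_mem _ ((w y)⁻¹) hmem
        have heq : (w y)⁻¹ • (w y • y) = y := by
          rw [smul_smul, inv_mul_cancel₀ hy₀pos.ne', one_smul]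
        rw [SetLike.mem_coe]
        rw [heq] at h12
        exact h12
      · exact Submodule.subset_span (Finset.mem_coe.mpr (Finset.mem_erase.mpr ⟨hne, hy⟩))
    have hspanle : Submodule.span ℝ (U : Set (EuclideanSpace ℝ (Fin n)))
        ≤ Submodule.span ℝ ((U.erase y₀ : Finset (EuclideanSpace ℝ (Fin n))) :
          Set (EuclideanSpace ℝ (Fin n))) := by
      rw [Submodule.span_le]
      exact hWle
    have hrank : finrank ℝ (Submodule.span ℝ (U : Set (EuclideanSpace ℝ (Fin n)))) ≤ d := by
      have h1 := finrank_span_finset_le_card (R := ℝ) (U.erase y₀)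
      rw [Set.finrank] at h1
      have h2 : (U.erase y₀).card = U.card - 1 := Finset.card_erase_of_mem hy₀U
      have h3 : U.card ≤ d + 1 :=
        le_trans Finset.card_image_le (le_trans (Finset.card_filter_le _ _) hscard)
      have h4 : 1 ≤ U.card := Finset.card_pos.mpr ⟨y₀, hy₀U⟩
      have h5 := Submodule.finrank_mono hspanle
      omega
    have hd_n : d ≤ finrank ℝ (EuclideanSpace ℝ (Fin n)) := by
      rw [finrank_euclideanSpace_fin]
      omega
    obtain ⟨ξ, hWξ, hξd⟩ := aux_superset (EuclideanSpace ℝ (Fin n)) d hd_n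
      (d - finrank ℝ (Submodule.span ℝ (U : Set (EuclideanSpace ℝ (Fin n)))))
      (Submodule.span ℝ (U : Set (EuclideanSpace ℝ (Fin n)))) (by omega)
    obtain ⟨vv, hvvξ, hQL⟩ := h ξ hξd
    have hproj : ∀ u' ∈ ξ, ∀ x, ⟪u', projSub ξ x⟫ = ⟪u', x⟫ := by
      intro u' hu' x
      have h1 : x - projSub ξ x ∈ ξᗮ := by
        have := ξ.sub_starProjection_mem_orthogonal x
        rwa [Submodule.starProjection_apply] at this
      have h2 : ⟪u', x - projSub ξ x⟫ = 0 := (Submodule.mem_orthogonal ξ _).mp h1 u' hu'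
      have h3 : ⟪u', x - projSub ξ x⟫ = ⟪u', x⟫ - ⟪u', projSub ξ x⟫ :=
        inner_sub_right (𝕜 := ℝ) u' x (projSub ξ x)
      linarith
    have hineq : ∀ q ∈ active, ⟪u q, vv - vs⟫ ≤ -r := by
      intro q hq
      have hqs : q ∈ s := (Finset.mem_filter.mp hq).1
      have hqQ : q ∈ Q := by
        rw [hQeq]
        exact subset_convexHull ℝ _ (Finset.mem_coe.mpr hqs)
      obtain ⟨x, hxL, hxeq⟩ := hQL ⟨projSub ξ q, ⟨q, hqQ, rfl⟩, rfl⟩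
      have huξ : u q ∈ ξ := hWξ
        (Submodule.subset_span (Finset.mem_coe.mpr (Finset.mem_image_of_mem u hq)))
      have h2 : ⟪u q, x⟫ = ⟪u q, q⟫ + ⟪u q, vv⟫ := by
        rw [← hproj (u q) huξ x, hxeq, inner_add_right, hproj (u q) huξ q]
      have h3 : ⟪u q, x - p q⟫ ≤ 0 := by
        have h4 := hobtuse q x hxL
        rw [hrepr q hq, real_inner_smul_left] at h4
        nlinarith
      have h6 : ⟪u q, (q + vs) - p q⟫ = r := by
        rw [hrepr q hq, real_inner_smul_right, real_inner_self_eq_norm_sq, hnorm_u q hq]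
        norm_num
      have h7 : ⟪u q, (q + vs) - p q⟫ = ⟪u q, q + vs⟫ - ⟪u q, p q⟫ :=
        inner_sub_right (𝕜 := ℝ) _ _ _
      have h8 : ⟪u q, q + vs⟫ = ⟪u q, q⟫ + ⟪u q, vs⟫ := inner_add_right (𝕜 := ℝ) _ _ _
      have h9 : ⟪u q, x - p q⟫ = ⟪u q, x⟫ - ⟪u q, p q⟫ := inner_sub_right (𝕜 := ℝ) _ _ _
      have h10 : ⟪u q, vv - vs⟫ = ⟪u q, vv⟫ - ⟪u q, vs⟫ := inner_sub_right (𝕜 := ℝ) _ _ _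
      linarith
    have hsum : ∑ y ∈ U, w y * ⟪y, vv - vs⟫ ≤ -r := by
      calc ∑ y ∈ U, w y * ⟪y, vv - vs⟫ ≤ ∑ y ∈ U, w y * (-r) := by
            refine Finset.sum_le_sum fun y hy => ?_
            obtain ⟨q, hq, rfl⟩ := Finset.mem_image.mp hy
            exact mul_le_mul_of_nonneg_left (hineq q hq) (hw0 _ hy)
        _ = -r := by rw [← Finset.sum_mul, hw1, one_mul]
    have hzero : ∑ y ∈ U, w y * ⟪y, vv - vs⟫ = 0 := by
      calc ∑ y ∈ U, w y * ⟪y, vv - vs⟫ = ∑ y ∈ U, ⟪w y • y, vv - vs⟫ := by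
            refine Finset.sum_congr rfl fun y _ => ?_
            rw [real_inner_smul_left]
        _ = ⟪∑ y ∈ U, w y • y, vv - vs⟫ := (sum_inner (𝕜 := ℝ) U (fun y => w y • y) (vv - vs)).symm
        _ = 0 := by rw [hwc, inner_zero_left]
    linarith
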